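/- If e^{-e} ≤ x ≤ e^{1/e}, then the power tower sequence y₁ = x, y_{n+1} = x^{y_n} converges, and its limit L satisfies x^L = L and 1/e ≤ L ≤ e. -/

import Mathlib

open Real Filter

open Real Filter

lemma key_ineq {s : ℝ} (hs0 : 0 < s) (hs1 : s < 1) :
    Real.exp s + Real.log (1 - s) < 1 := by
  have H : StrictAntiOn (fun u : ℝ => Real.exp u + Real.log (1 - u)) (Set.Ico 0 1) := by
    apply strictAntiOn_of_deriv_neg (convex_Ico 0 1)
    · apply Real.continuous_exp.continuousOn.add
      apply ContinuousOn.log ((continuous_const.sub continuous_id).continuousOn)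
      intro u hu
      simp only [Set.mem_Ico] at hu
      have : (0:ℝ) < 1 - u := by linarith [hu.2]
      exact ne_of_gt this
    · intro u hu
      rw [interior_Ico] at hu
      obtain ⟨hu0, hu1⟩ := hu
      have h1u : (0:ℝ) < 1 - u := by linarith
      have hd : HasDerivAt (fun u : ℝ => Real.exp u + Real.log (1 - u))
          (Real.exp u + (0 - 1) / (1 - u)) u := by
        exact (Real.hasDerivAt_exp u).add
          (((hasDerivAt_const u (1:ℝ)).sub (hasDerivAt_id u)).log (ne_of_gt h1u))
      rw [hd.deriv]
      have hlt : (1 - u) * Real.exp u < 1 := by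
        have := Real.add_one_lt_exp (x := -u) (by linarith)
        have h2 : 1 - u < Real.exp (-u) := by linarith
        calc (1 - u) * Real.exp u < Real.exp (-u) * Real.exp u :=
              mul_lt_mul_of_pos_right h2 (Real.exp_pos u)
          _ = 1 := by rw [← Real.exp_add]; simp
      have : Real.exp u < 1 / (1 - u) := by
        rw [lt_div_iff₀ h1u]; linarith [hlt]
      have heq : (0 - 1) / (1 - u) = -(1 / (1 - u)) := by ring
      rw [heq]; linarith
  have := H (Set.mem_Ico.mpr ⟨le_refl 0, one_pos⟩) (Set.mem_Ico.mpr ⟨hs0.le, hs1⟩) hs0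
  simpa using this

-- ψ(t) = log t - t strict mono on (0,1], strict anti on [1,∞)
lemma psi_lt_psi_of_lt_of_le_one {a b : ℝ} (ha : 0 < a) (hab : a < b) (hb : b ≤ 1) :
    Real.log a - a < Real.log b - b := by
  have hb0 : 0 < b := ha.trans hab
  have h1 : Real.log (a / b) < a / b - 1 :=
    Real.log_lt_sub_one_of_pos (div_pos ha hb0) (by
      intro h
      rw [div_eq_one_iff_eq (ne_of_gt hb0)] at h
      exact absurd h (ne_of_lt hab))
  rw [Real.log_div (ne_of_gt ha) (ne_of_gt hb0)] at h1
  have h2 : a / b - 1 = -((b - a) / b) := by field_simp; ring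
  rw [h2] at h1
  have h3 : (b - a) / b ≥ b - a := by
    rw [ge_iff_le, div_eq_mul_inv]
    nlinarith [inv_anti₀ hb0 hb]
  nlinarith [h1, h3]

lemma psi_lt_psi_of_one_le_of_lt {a b : ℝ} (ha : 1 ≤ a) (hab : a < b) :
    Real.log b - b < Real.log a - a := by
  have ha0 : (0:ℝ) < a := lt_of_lt_of_le one_pos ha
  have hb0 : 0 < b := ha0.trans hab
  have h1 : Real.log (b / a) < b / a - 1 :=
    Real.log_lt_sub_one_of_pos (div_pos hb0 ha0) (by
      intro h
      rw [div_eq_one_iff_eq (ne_of_gt ha0)] at h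
      exact absurd h.symm (ne_of_lt hab))
  rw [Real.log_div (ne_of_gt hb0) (ne_of_gt ha0)] at h1
  have h3 : b / a - 1 = (b - a)/a := by field_simp
  rw [h3] at h1
  have h4 : (b - a)/a ≤ b - a := by
    rw [div_le_iff₀ ha0]; nlinarith
  linarith

lemma cycle_eq {x A B : ℝ} (hx0 : 0 < x) (hxe : Real.exp (-Real.exp 1) ≤ x)
    (hx1 : x < 1) (hA : 0 < A) (hAB : A ≤ B)
    (h1 : x ^ B = A) (h2 : x ^ A = B) : A = B := by
  have hB : 0 < B := lt_of_lt_of_le hA hAB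
  set c : ℝ := -Real.log x with hc_def
  have hlogx : Real.log x < 0 := Real.log_neg hx0 hx1
  have hc0 : 0 < c := by simp [hc_def]; linarith
  have hce : c ≤ Real.exp 1 := by
    have := Real.log_le_log (Real.exp_pos _) hxe
    rw [Real.log_exp] at this
    simp [hc_def]; linarith
  have hlogA : Real.log A = -(c * B) := by
    rw [← h1, Real.rpow_def_of_pos hx0, Real.log_exp]; ring
  have hlogB : Real.log B = -(c * A) := by
    rw [← h2, Real.rpow_def_of_pos hx0, Real.log_exp]; ring
  set p : ℝ := c * A with hp_def
  set q : ℝ := c * B with hq_def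
  have hp : 0 < p := mul_pos hc0 hA
  have hq : 0 < q := mul_pos hc0 hB
  have hlogp : Real.log p = Real.log c - q := by
    rw [hp_def, Real.log_mul (ne_of_gt hc0) (ne_of_gt hA), hlogA]; ring
  have hlogq : Real.log q = Real.log c - p := by
    rw [hq_def, Real.log_mul (ne_of_gt hc0) (ne_of_gt hB), hlogB]; ring
  by_contra hne
  have hABlt : A < B := lt_of_le_of_ne hAB hne
  have hpq : p < q := by
    apply mul_lt_mul_of_pos_left hABlt hc0
  have hpsi : Real.log p - p = Real.log q - q := by rw [hlogp, hlogq]; ring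
  have hp1 : p < 1 := by
    by_contra h
    push_neg at h
    have := psi_lt_psi_of_one_le_of_lt h hpq
    linarith
  have hq1 : 1 < q := by
    by_contra h
    push_neg at h
    have := psi_lt_psi_of_lt_of_le_one hp hpq h
    linarith
  have hlogc : Real.log c ≤ 1 := by
    have := Real.log_le_log hc0 hce
    rwa [Real.log_exp] at this
  have hkey : 1 < Real.log q + p := by
    rcases le_or_gt (Real.exp 1) q with hqe | hqe
    · have : (1:ℝ) ≤ Real.log q := by
        have := Real.log_le_log (Real.exp_pos 1) hqe
        rwa [Real.log_exp] at this
      linarith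
    · set s : ℝ := Real.log q with hs_def
      have hs0 : 0 < s := Real.log_pos hq1
      have hs1 : s < 1 := by
        have := Real.log_lt_log hq hqe
        rwa [Real.log_exp] at this
      have hq_eq : Real.exp s = q := Real.exp_log hq
      have key := key_ineq hs0 hs1
      have hpsi1s : Real.log (1 - s) - (1 - s) < Real.log p - p := by
        rw [hpsi]
        rw [← hq_eq]
        linarith
      have h1sp : 1 - s < p := by
        rcases lt_trichotomy p (1 - s) with h | h | h
        · have := psi_lt_psi_of_lt_of_le_one hp h (by linarith)
          linarith
        · rw [h] at hpsi1s; linarith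
        · exact h
      linarith
  have hsum : Real.log p + Real.log q + p + q = 2 * Real.log c := by
    rw [hlogp, hlogq]; ring
  have : Real.log p + q = Real.log q + p := by linarith
  linarith


lemma tendsto_of_even_odd {f : ℕ → ℝ} {L : ℝ}
    (he : Tendsto (fun n => f (2*n)) atTop (nhds L))
    (ho : Tendsto (fun n => f (2*n+1)) atTop (nhds L)) :
    Tendsto f atTop (nhds L) := by
  rw [Metric.tendsto_atTop] at he ho ⊢
  intro ε hε
  obtain ⟨N1, h1⟩ := he ε hε
  obtain ⟨N2, h2⟩ := ho ε hε
  refine ⟨2*N1 + 2*N2 + 2, fun n hn => ?_⟩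
  rcases Nat.even_or_odd n with ⟨k, hk⟩ | ⟨k, hk⟩
  · have hk' : n = 2*k := by omega
    have : N1 ≤ k := by omega
    rw [hk']
    exact h1 k this
  · have : N2 ≤ k := by omega
    rw [hk]
    exact h2 k this

lemma rpow_continuous {x : ℝ} (hx0 : 0 < x) : Continuous fun y : ℝ => x ^ y := by
  have h : (fun y : ℝ => x ^ y) = fun y => Real.exp (Real.log x * y) := by
    funext y; rw [Real.rpow_def_of_pos hx0]
  rw [h]
  exact Real.continuous_exp.comp (continuous_const.mul continuous_id)

lemma caseA (x : ℝ) (hx1 : 1 ≤ x) (hx2 : x ≤ Real.exp (1/Real.exp 1))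
    (t : ℕ → ℝ) (h0 : t 0 = x) (hrec : ∀ n, t (n+1) = x ^ t n) :
    ∃ L : ℝ, Tendsto t atTop (nhds L) ∧ x ^ L = L ∧
      1 / Real.exp 1 ≤ L ∧ L ≤ Real.exp 1 := by
  have hx0 : (0:ℝ) < x := lt_of_lt_of_le one_pos hx1
  have he1 : (1:ℝ) ≤ Real.exp 1 := by linarith [Real.add_one_le_exp 1]
  have hxeE : x ^ Real.exp 1 ≤ Real.exp 1 := by
    calc x ^ Real.exp 1 ≤ (Real.exp (1/Real.exp 1)) ^ Real.exp 1 :=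
          Real.rpow_le_rpow hx0.le hx2 (Real.exp_pos 1).le
      _ = Real.exp 1 := by
          rw [← Real.exp_one_rpow (1/Real.exp 1), ← Real.rpow_mul (Real.exp_pos 1).le,
            one_div_mul_cancel (Real.exp_ne_zero 1), Real.rpow_one]
  have hub : ∀ n, t n ≤ Real.exp 1 := by
    intro n
    induction n with
    | zero =>
      rw [h0]
      calc x ≤ Real.exp (1/Real.exp 1) := hx2
        _ ≤ Real.exp 1 := by
            apply Real.exp_le_exp.mpr
            rw [div_le_one (by positivity)]; exact he1
    | succ n ih =>
      rw [hrec]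
      calc x ^ t n ≤ x ^ Real.exp 1 := Real.rpow_le_rpow_of_exponent_le hx1 ih
        _ ≤ Real.exp 1 := hxeE
  have hge1 : ∀ n, 1 ≤ t n := by
    intro n
    induction n with
    | zero => rw [h0]; exact hx1
    | succ n ih =>
      rw [hrec]
      calc (1:ℝ) = x ^ (0:ℝ) := (Real.rpow_zero x).symm
        _ ≤ x ^ t n := Real.rpow_le_rpow_of_exponent_le hx1 (by linarith)
  have hmono : Monotone t := by
    apply monotone_nat_of_le_succ
    intro n
    induction n with
    | zero =>
      rw [hrec, h0]
      calc x = x ^ (1:ℝ) := (Real.rpow_one x).symm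
        _ ≤ x ^ x := Real.rpow_le_rpow_of_exponent_le hx1 hx1
    | succ n ih =>
      rw [hrec (n+1)]
      rw [hrec n] at ih ⊢
      exact Real.rpow_le_rpow_of_exponent_le hx1 ih
  have hbdd : BddAbove (Set.range t) := ⟨Real.exp 1, by rintro _ ⟨n, rfl⟩; exact hub n⟩
  set L := ⨆ n, t n with hL
  have ht : Tendsto t atTop (nhds L) := tendsto_atTop_ciSup hmono hbdd
  have hfix : x ^ L = L := by
    have h1 : Tendsto (fun n => t (n+1)) atTop (nhds L) :=
      (Filter.tendsto_add_atTop_iff_nat 1).mpr ht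
    have h2 : Tendsto (fun n => x ^ t n) atTop (nhds (x ^ L)) :=
      ((rpow_continuous hx0).tendsto L).comp ht
    have heq : (fun n => t (n+1)) = fun n => x ^ t n := funext hrec
    rw [heq] at h1
    exact tendsto_nhds_unique h2 h1
  refine ⟨L, ht, hfix, ?_, ciSup_le hub⟩
  have : t 0 ≤ L := le_ciSup hbdd 0
  have h1e : 1 / Real.exp 1 ≤ 1 := by
    rw [div_le_one (Real.exp_pos 1)]; exact he1
  calc 1/Real.exp 1 ≤ 1 := h1e
    _ ≤ t 0 := hge1 0
    _ ≤ L := this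

lemma caseB (x : ℝ) (hxe : Real.exp (-Real.exp 1) ≤ x) (hx1 : x < 1)
    (t : ℕ → ℝ) (h0 : t 0 = x) (hrec : ∀ n, t (n+1) = x ^ t n) :
    ∃ L : ℝ, Tendsto t atTop (nhds L) ∧ x ^ L = L ∧
      1 / Real.exp 1 ≤ L ∧ L ≤ Real.exp 1 := by
  have hx0 : (0:ℝ) < x := lt_of_lt_of_le (Real.exp_pos _) hxe
  have he1 : (1:ℝ) ≤ Real.exp 1 := by linarith [Real.add_one_le_exp 1]
  -- invariant
  have hinv : ∀ n, x ≤ t n ∧ t n ≤ 1 := by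
    intro n
    induction n with
    | zero => rw [h0]; exact ⟨le_refl x, hx1.le⟩
    | succ n ih =>
      rw [hrec]
      constructor
      · calc x = x ^ (1:ℝ) := (Real.rpow_one x).symm
          _ ≤ x ^ t n := Real.rpow_le_rpow_of_exponent_ge hx0 hx1.le ih.2
      · exact Real.rpow_le_one hx0.le hx1.le (le_trans hx0.le ih.1)
  -- g monotone
  have hg : ∀ a b : ℝ, a ≤ b → x ^ x ^ a ≤ x ^ x ^ b := fun a b hab =>
    Real.rpow_le_rpow_of_exponent_ge hx0 hx1.le
      (Real.rpow_le_rpow_of_exponent_ge hx0 hx1.le hab)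
  set z : ℕ → ℝ := fun n => t (2*n) with hz_def
  set w : ℕ → ℝ := fun n => t (2*n+1) with hw_def
  have hz_succ : ∀ n, z (n+1) = x ^ x ^ z n := by
    intro n
    show t (2*(n+1)) = x ^ x ^ t (2*n)
    have h2 : 2*(n+1) = (2*n+1)+1 := by ring
    rw [h2, hrec, hrec]
  have hw_z : ∀ n, w n = x ^ z n := by
    intro n
    show t (2*n+1) = x ^ t (2*n)
    rw [hrec]
  have hw_succ : ∀ n, w (n+1) = x ^ x ^ w n := by
    intro n
    show t (2*(n+1)+1) = x ^ x ^ t (2*n+1)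
    have h2 : 2*(n+1)+1 = ((2*n+1)+1)+1 := by ring
    rw [h2, hrec, hrec]
  -- z monotone
  have hz_step : ∀ n, z n ≤ z (n+1) := by
    intro n
    induction n with
    | zero =>
      rw [hz_succ]
      show t 0 ≤ x ^ x ^ t 0
      rw [h0]
      have hxx : x ^ x ≤ 1 := Real.rpow_le_one hx0.le hx1.le hx0.le
      calc x = x ^ (1:ℝ) := (Real.rpow_one x).symm
        _ ≤ x ^ x ^ x := Real.rpow_le_rpow_of_exponent_ge hx0 hx1.le hxx
    | succ n ih =>
      rw [hz_succ (n+1), hz_succ n]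
      rw [hz_succ n] at ih
      exact hg _ _ ih
  have hzmono : Monotone z := monotone_nat_of_le_succ hz_step
  have hwanti : Antitone w := by
    intro m n hmn
    rw [hw_z m, hw_z n]
    exact Real.rpow_le_rpow_of_exponent_ge hx0 hx1.le (hzmono hmn)
  -- z n ≤ w n
  have hzw : ∀ n, z n ≤ w n := by
    intro n
    induction n with
    | zero =>
      rw [hw_z]
      show t 0 ≤ x ^ t 0
      rw [h0]
      calc x = x ^ (1:ℝ) := (Real.rpow_one x).symm
        _ ≤ x ^ x := Real.rpow_le_rpow_of_exponent_ge hx0 hx1.le hx1.le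
    | succ n ih =>
      rw [hz_succ, hw_succ]
      exact hg _ _ ih
  set A := ⨆ n, z n with hA_def
  set B := ⨅ n, w n with hB_def
  have hbddz : BddAbove (Set.range z) := ⟨1, by rintro _ ⟨n, rfl⟩; exact (hinv (2*n)).2⟩
  have hbddw : BddBelow (Set.range w) := ⟨x, by rintro _ ⟨n, rfl⟩; exact (hinv (2*n+1)).1⟩
  have hzA : Tendsto z atTop (nhds A) := tendsto_atTop_ciSup hzmono hbddz
  have hwB : Tendsto w atTop (nhds B) := tendsto_atTop_ciInf hwanti hbddw
  have hApos : 0 < A := by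
    have : z 0 ≤ A := le_ciSup hbddz 0
    have hz0 : z 0 = x := h0
    linarith [hz0 ▸ this]
  have hA1 : A ≤ 1 := ciSup_le fun n => (hinv (2*n)).2
  have hxA_B : x ^ A = B := by
    have h2 : Tendsto (fun n => x ^ z n) atTop (nhds (x ^ A)) :=
      ((rpow_continuous hx0).tendsto A).comp hzA
    have heq : (fun n => x ^ z n) = w := (funext hw_z).symm
    rw [heq] at h2
    exact tendsto_nhds_unique h2 hwB
  have hxB_A : x ^ B = A := by
    have h1 : Tendsto (fun n => z (n+1)) atTop (nhds A) :=
      (Filter.tendsto_add_atTop_iff_nat 1).mpr hzA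
    have h2 : Tendsto (fun n => x ^ w n) atTop (nhds (x ^ B)) :=
      ((rpow_continuous hx0).tendsto B).comp hwB
    have heq : (fun n => z (n+1)) = fun n => x ^ w n := by
      funext n
      show t (2*(n+1)) = x ^ t (2*n+1)
      have h3 : 2*(n+1) = (2*n+1)+1 := by ring
      rw [h3, hrec]
    rw [heq] at h1
    exact tendsto_nhds_unique h2 h1
  have hAB : A ≤ B := le_of_tendsto_of_tendsto' hzA hwB hzw
  have hABeq : A = B := cycle_eq hx0 hxe hx1 hApos hAB hxB_A hxA_B
  have ht : Tendsto t atTop (nhds A) := by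
    apply tendsto_of_even_odd
    · exact hzA
    · rw [hABeq]; exact hwB
  have hfix : x ^ A = A := by rw [hxA_B, hABeq]
  refine ⟨A, ht, hfix, ?_, le_trans hA1 he1⟩
  by_contra hlt
  push_neg at hlt
  have hloge : -Real.exp 1 ≤ Real.log x := by
    have := Real.log_le_log (Real.exp_pos _) hxe
    rwa [Real.log_exp] at this
  have hlogx : Real.log x < 0 := Real.log_neg hx0 hx1
  have h1 : Real.log x * (1/Real.exp 1) < Real.log x * A := by
    exact mul_lt_mul_of_neg_left hlt hlogx
  have h2 : (-Real.exp 1) * (1/Real.exp 1) ≤ Real.log x * (1/Real.exp 1) :=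
    mul_le_mul_of_nonneg_right hloge (by positivity)
  have h3 : (-Real.exp 1) * (1/Real.exp 1) = -1 := by
    field_simp
  have h4 : -1 < Real.log x * A := by linarith
  have h5 : Real.exp (-1) < Real.exp (Real.log x * A) := Real.exp_lt_exp.mpr h4
  have h6 : Real.exp (Real.log x * A) = A := by
    rw [← Real.rpow_def_of_pos hx0, hfix]
  have h7 : Real.exp (-1) = 1/Real.exp 1 := by
    rw [Real.exp_neg]; field_simp
  rw [h6, h7] at h5
  linarith


/-- If `e^(-e) ≤ x ≤ e^(1/e)`, then the power tower sequence `y₁ = x`,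
`y_{n+1} = x^(y_n)` converges, and its limit `L` satisfies `x^L = L` and
`1/e ≤ L ≤ e`. -/
theorem powerTower_converges_on_interval
    (x : ℝ) (hx1 : Real.exp 1 ^ (-Real.exp 1) ≤ x)
    (hx2 : x ≤ Real.exp 1 ^ (1 / Real.exp 1))
    (y : ℕ → ℝ) (h1 : y 1 = x)
    (hrec : ∀ n, 1 ≤ n → y (n + 1) = x ^ y n) :
    ∃ L : ℝ, Filter.Tendsto y Filter.atTop (nhds L) ∧
      x ^ L = L ∧ 1 / Real.exp 1 ≤ L ∧ L ≤ Real.exp 1 := by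
  rw [Real.exp_one_rpow] at hx1 hx2
  set t : ℕ → ℝ := fun n => y (n + 1) with ht_def
  have ht0 : t 0 = x := h1
  have htrec : ∀ n, t (n + 1) = x ^ t n := by
    intro n
    show y (n + 1 + 1) = x ^ y (n + 1)
    exact hrec (n + 1) (by omega)
  have key : ∃ L : ℝ, Filter.Tendsto t Filter.atTop (nhds L) ∧
      x ^ L = L ∧ 1 / Real.exp 1 ≤ L ∧ L ≤ Real.exp 1 := by
    rcases le_or_gt 1 x with hx | hx
    · exact caseA x hx hx2 t ht0 htrec
    · exact caseB x hx1 hx t ht0 htrec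
  obtain ⟨L, htL, hfix, hlo, hhi⟩ := key
  refine ⟨L, ?_, hfix, hlo, hhi⟩
  exact (Filter.tendsto_add_atTop_iff_nat 1).mp htL
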